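/- Let m, n be coprime. The area and dinv statistics are equidistributed on (m,n)-parking words: Σ_{p ∈ PW_m^n} q^{area(p)} = Σ_{p ∈ PW_m^n} q^{dinv(p)} as polynomials in q, where area(p) = (m−1)(n−1)/2 − Σ_i A(𝔭)_i and dinv(p) = (m−1)(n−1)/2 − Σ_i B(𝔭)_i, with A and B the two bijections from parking (m,n)-filter tuples to parking words. Equivalently, the statistic p ↦ Σ_{i} p_i has the same distribution on PW_m^n as the statistic p ↦ Σ_i ζ(p)_i, where ζ = B ∘ A^{-1} is a bijection of PW_m^n to itself. -/

import Mathlib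

def IsParkingWord (m n : ℕ) (p : Fin n → ℕ) : Prop :=
  (∀ j, p j < m) ∧
  ∀ i : ℕ, 1 ≤ i → i ≤ m →
    i * n ≤ m * (Finset.univ.filter (fun j => p j < i)).card

/-- A parking (m,n)-filter tuple (see the paper): the sorted `m`-tuples
`r i = m(𝔭^{(i)})` of row-minimal levels, together with the removed levels. -/
structure ParkingTuple (m n : ℕ) where
  r : Fin (n + 1) → Fin m → ℤ
  removed : Fin n → ℤ
  mono : ∀ i, Monotone (r i)
  res : ∀ i, ∀ j k : Fin m, (m : ℤ) ∣ (r i j - r i k) → j = k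
  nonneg : ∀ j, 0 ≤ r 0 j
  zero_min : ∃ j, r 0 j = 0
  closed : ∀ j, ∃ j' : Fin m, ∃ k : ℕ, r 0 j + (n : ℤ) = r 0 j' + (k : ℤ) * (m : ℤ)
  mem : ∀ i : Fin n, removed i ∈ Multiset.map (r i.castSucc) Finset.univ.val
  step : ∀ i : Fin n,
    Multiset.map (r i.succ) Finset.univ.val =
      (removed i + (m : ℤ)) ::ₘ
        (Multiset.map (r i.castSucc) Finset.univ.val).erase (removed i)
  last : ∀ j, r (Fin.last n) j = r 0 j + (n : ℤ)

/-- The map `A` (area word): `A(𝔭)_i = a · p_i mod m` where `a·n ≡ -1 (mod m)`. -/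
def Aword {m n : ℕ} (a : ℤ) (t : ParkingTuple m n) (i : Fin n) : ℕ :=
  ((a * t.removed i) % (m : ℤ)).toNat

/-- The map `B` (dinv word): at step `i` record the rank of the removed level
within the current sorted tuple of row minima. -/
def Brank {m n : ℕ} (t : ParkingTuple m n) (i : Fin n) : ℕ :=
  (Finset.univ.filter (fun j : Fin m => t.r i.castSucc j < t.removed i)).card

/-! ### auxiliary infrastructure -/

section Infra
/-- Uniqueness of strictly monotone enumeration of a multiset. -/
lemma strictMono_eq_of_map_eq {f g : Fin m → ℤ} (hf : StrictMono f) (hg : StrictMono g)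
    (h : Multiset.map f Finset.univ.val = Multiset.map g Finset.univ.val) : f = g := by
  have himg : Finset.image g Finset.univ = Finset.image f Finset.univ := by
    ext x
    simp only [Finset.mem_image]
    constructor
    · rintro ⟨a, -, rfl⟩
      have : g a ∈ Multiset.map f Finset.univ.val := by
        rw [h]; exact Multiset.mem_map_of_mem _ (Finset.mem_univ a)
      rcases Multiset.mem_map.1 this with ⟨b, -, hb⟩
      exact ⟨b, Finset.mem_univ b, hb⟩
    · rintro ⟨a, -, rfl⟩
      have : f a ∈ Multiset.map g Finset.univ.val := by
        rw [← h]; exact Multiset.mem_map_of_mem _ (Finset.mem_univ a)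
      rcases Multiset.mem_map.1 this with ⟨b, -, hb⟩
      exact ⟨b, Finset.mem_univ b, hb⟩
  have hcard : (Finset.image f Finset.univ).card = m := by
    rw [Finset.card_image_of_injective _ hf.injective, Finset.card_univ, Fintype.card_fin]
  have h1 := Finset.orderEmbOfFin_unique hcard
      (fun x => Finset.mem_image_of_mem f (Finset.mem_univ x)) hf
  have h2 := Finset.orderEmbOfFin_unique hcard
      (fun x => himg ▸ Finset.mem_image_of_mem g (Finset.mem_univ x)) hg
  exact h1.trans h2.symm

/-- Existence of a permutation relating two enumerations of the same multiset. -/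
lemma exists_comp_perm {f g : Fin m → ℤ} (hg : Function.Injective g)
    (h : Multiset.map f Finset.univ.val = Multiset.map g Finset.univ.val) :
    ∃ σ : Equiv.Perm (Fin m), f = g ∘ σ := by
  have hmem : ∀ j, ∃ k, g k = f j := by
    intro j
    have : f j ∈ Multiset.map g Finset.univ.val := by
      rw [← h]; exact Multiset.mem_map_of_mem _ (Finset.mem_univ j)
    rcases Multiset.mem_map.1 this with ⟨k, -, hk⟩
    exact ⟨k, hk⟩
  choose σ' hσ' using hmem
  have hfinj : Function.Injective f := by
    have hnd : (Multiset.map f Finset.univ.val).Nodup := by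
      rw [h]; exact Multiset.Nodup.map hg Finset.univ.nodup
    intro a b hab
    exact Multiset.inj_on_of_nodup_map hnd a (Finset.mem_univ a) b (Finset.mem_univ b) hab
  have hinj : Function.Injective σ' := by
    intro a b hab
    apply hfinj
    rw [← hσ' a, ← hσ' b, hab]
  have hbij : Function.Bijective σ' := Finite.injective_iff_bijective.1 hinj
  refine ⟨Equiv.ofBijective σ' hbij, ?_⟩
  funext j
  simp [Equiv.ofBijective, hσ' j]

lemma map_update_univ {α : Type*} [Fintype α] [DecidableEq α] (f : α → ℤ)
    (hf : Function.Injective f) (j : α) (v : ℤ) :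
    Multiset.map (Function.update f j v) Finset.univ.val =
      v ::ₘ (Multiset.map f Finset.univ.val).erase (f j) := by
  have huniv : (Finset.univ.val : Multiset α) = j ::ₘ Finset.univ.val.erase j :=
    (Multiset.cons_erase (Finset.mem_univ j)).symm
  have herase : (Multiset.map f Finset.univ.val).erase (f j)
      = Multiset.map f (Finset.univ.val.erase j) := (Multiset.map_erase f hf j _).symm
  rw [herase]
  conv_lhs => rw [huniv]
  rw [Multiset.map_cons, Function.update_self]
  congr 1
  apply Multiset.map_congr rfl
  intro x hx
  have hxj : x ≠ j := ((Finset.univ.nodup.mem_erase_iff).1 hx).1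
  simp [Function.update_of_ne hxj]


lemma le_val_of_strictMono {r m : ℕ} {f : Fin r → Fin m} (hf : StrictMono f) (k : Fin r) :
    k.val ≤ (f k).val := by
  suffices h : ∀ K : ℕ, ∀ k : Fin r, k.val = K → K ≤ (f k).val from h k.val k rfl
  intro K
  induction K with
  | zero => intro k _; exact Nat.zero_le _
  | succ K ih =>
    intro k hk
    have hK : K < r := by omega
    have h1 := ih ⟨K, hK⟩ rfl
    have h2 : f ⟨K, hK⟩ < f k := hf (by simp [Fin.lt_def, hk])
    have h3 : (f ⟨K, hK⟩).val < (f k).val := h2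
    omega

lemma sum_eq_sum_orderEmbOfFin {m r : ℕ} {S : Finset (Fin m)} (h : S.card = r) (z : Fin m → ℤ) :
    ∑ j ∈ S, z j = ∑ k : Fin r, z (S.orderEmbOfFin h k) := by
  have himg : Finset.image (S.orderEmbOfFin h) Finset.univ = S := by
    apply Finset.coe_injective
    rw [Finset.coe_image, Finset.coe_univ, Set.image_univ, Finset.range_orderEmbOfFin]
  have hs : ∑ j ∈ S, z j = ∑ j ∈ Finset.image (S.orderEmbOfFin h) Finset.univ, z j :=
    Finset.sum_congr himg.symm (fun x _ => rfl)
  rw [hs, Finset.sum_image (fun a _ b _ hab => (S.orderEmbOfFin h).injective hab)]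
end Infra

/-! ### tuple basics -/
namespace ParkingTuple

variable {m n : ℕ} (t : ParkingTuple m n)

lemma r_injective (i : Fin (n+1)) : Function.Injective (t.r i) := by
  intro j k h
  exact t.res i j k (by rw [h, sub_self]; exact dvd_zero _)

lemma strictMono_r (i : Fin (n+1)) : StrictMono (t.r i) :=
  (t.mono i).strictMono_of_injective (t.r_injective i)

include t in
lemma mpos (hn : 0 < n) : 0 < m := by
  obtain ⟨j, -, -⟩ := Multiset.mem_map.1 (ParkingTuple.mem t ⟨0, hn⟩)
  exact j.pos

/-- index of the removed entry -/
noncomputable def removedIdx (i : Fin n) : Fin m :=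
  (Multiset.mem_map.1 (t.mem i)).choose

lemma r_removedIdx (i : Fin n) : t.r i.castSucc (t.removedIdx i) = t.removed i :=
  (Multiset.mem_map.1 (t.mem i)).choose_spec.2

lemma brank_eq_removedIdx (i : Fin n) : Brank t i = (t.removedIdx i : ℕ) := by
  unfold Brank
  have h1 : (Finset.univ.filter (fun j : Fin m => t.r i.castSucc j < t.removed i))
      = Finset.univ.filter (fun j : Fin m => j < t.removedIdx i) := by
    apply Finset.filter_congr
    intro j _
    rw [← t.r_removedIdx i]
    exact ⟨fun h => by simpa using (t.strictMono_r i.castSucc).lt_iff_lt.1 h,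
      fun h => by exact (t.strictMono_r i.castSucc) (by simpa using h)⟩
  rw [h1]
  have h2 : Finset.univ.filter (fun j : Fin m => j < t.removedIdx i) = Finset.Iio (t.removedIdx i) := by
    ext k; simp
  rw [h2, Fin.card_Iio]

lemma brank_lt (i : Fin n) : Brank t i < m := by
  rw [t.brank_eq_removedIdx i]; exact (t.removedIdx i).isLt

/-- the pre-sort bumped vector -/
noncomputable def bump (i : Fin n) : Fin m → ℤ :=
  Function.update (t.r i.castSucc) (t.removedIdx i) (t.removed i + (m : ℤ))

lemma bump_injective (i : Fin n) : Function.Injective (t.bump i) := by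
  intro a b h
  unfold bump at h
  by_cases ha : a = t.removedIdx i <;> by_cases hb : b = t.removedIdx i
  · rw [ha, hb]
  · exfalso
    rw [ha, Function.update_self, Function.update_of_ne hb] at h
    have : (m : ℤ) ∣ t.r i.castSucc b - t.r i.castSucc (t.removedIdx i) := by
      rw [t.r_removedIdx i, ← h]; ring_nf; exact Dvd.intro 1 (by ring)
    exact hb (t.res i.castSucc b (t.removedIdx i) this)
  · exfalso
    rw [hb, Function.update_self, Function.update_of_ne ha] at h
    have : (m : ℤ) ∣ t.r i.castSucc a - t.r i.castSucc (t.removedIdx i) := by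
      rw [t.r_removedIdx i, h]; exact Dvd.intro 1 (by ring)
    exact ha (t.res i.castSucc a (t.removedIdx i) this)
  · rw [Function.update_of_ne ha, Function.update_of_ne hb] at h
    exact t.r_injective i.castSucc h

lemma map_bump (i : Fin n) :
    Multiset.map (t.r i.succ) Finset.univ.val = Multiset.map (t.bump i) Finset.univ.val := by
  rw [t.step i, bump, map_update_univ _ (t.r_injective i.castSucc), t.r_removedIdx i]

/-- the sorting permutation: `t.r i.succ = t.bump i ∘ sortPerm t i` -/
noncomputable def sortPerm (i : Fin n) : Equiv.Perm (Fin m) :=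
  (exists_comp_perm (t.bump_injective i) (t.map_bump i)).choose

lemma r_succ_eq (i : Fin n) : t.r i.succ = t.bump i ∘ (t.sortPerm i) :=
  (exists_comp_perm (t.bump_injective i) (t.map_bump i)).choose_spec

lemma bump_apply (i : Fin n) (k : Fin m) :
    t.bump i k = t.r i.castSucc k + (if k = t.removedIdx i then (m : ℤ) else 0) := by
  unfold bump
  by_cases h : k = t.removedIdx i
  · subst h; rw [Function.update_self, if_pos rfl, t.r_removedIdx i]
  · rw [Function.update_of_ne h, if_neg h, add_zero]

lemma r_zero_zero (hm : 0 < m) : t.r 0 ⟨0, hm⟩ = 0 := by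
  obtain ⟨j, hj⟩ := t.zero_min
  have h1 : t.r 0 ⟨0, hm⟩ ≤ t.r 0 j := t.mono 0 (by simp [Fin.le_def])
  have h2 := t.nonneg ⟨0, hm⟩
  omega

end ParkingTuple

namespace ParkingTuple
variable {m n : ℕ} (t : ParkingTuple m n)

/-- bottom-`R` sums can only grow by `m` when the removed entry is among the bottom `R`. -/
lemma phi_step (R : ℕ) (hRm : R ≤ m) (i : Fin n) :
    ∑ j ∈ Finset.univ.filter (fun j : Fin m => (j : ℕ) < R), t.r i.succ j ≤
      (∑ j ∈ Finset.univ.filter (fun j : Fin m => (j : ℕ) < R), t.r i.castSucc j) +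
        (if Brank t i < R then (m : ℤ) else 0) := by
  set T := Finset.univ.filter (fun j : Fin m => (j : ℕ) < R) with hT
  have hTcard : T.card = R := by
    rw [hT]
    rw [show (Finset.univ.filter (fun j : Fin m => (j : ℕ) < R)) =
      (Finset.range R).attachFin (fun x hx => lt_of_lt_of_le (Finset.mem_range.1 hx) hRm) from ?_]
    · rw [Finset.card_attachFin, Finset.card_range]
    · ext j
      simp [Finset.mem_attachFin]
  -- the set S := σ⁻¹ '' T
  set σ := t.sortPerm i with hσ
  set S := Finset.image (⇑σ⁻¹) T with hS
  have hScard : S.card = R := by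
    rw [hS, Finset.card_image_of_injective _ (Equiv.injective _), hTcard]
  -- bottom-R sum of the sorted vector is at most the sum over S
  have hbot : ∑ j ∈ T, t.r i.succ j ≤ ∑ j ∈ S, t.r i.succ j := by
    rw [sum_eq_sum_orderEmbOfFin hTcard, sum_eq_sum_orderEmbOfFin hScard]
    apply Finset.sum_le_sum
    intro k _
    apply (t.strictMono_r i.succ).monotone
    have h1 : (T.orderEmbOfFin hTcard) k = ⟨(k : ℕ), lt_of_lt_of_le k.isLt hRm⟩ := by
      have := Finset.orderEmbOfFin_unique hTcard
        (f := fun k : Fin R => (⟨(k : ℕ), lt_of_lt_of_le k.isLt hRm⟩ : Fin m))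
        (fun x => by
          rw [hT, Finset.mem_filter]
          exact ⟨Finset.mem_univ _, x.isLt⟩)
        (fun a b hab => Fin.mk_lt_mk.2 hab)
      exact (congrFun this k).symm
    rw [h1]
    have h2 := le_val_of_strictMono (S.orderEmbOfFin hScard).strictMono k
    simp only [Fin.le_def]
    exact h2
  refine hbot.trans ?_
  -- sum over S equals sum of bump over T
  have hsum : ∑ j ∈ S, t.r i.succ j = ∑ j ∈ T, t.bump i j := by
    rw [hS, Finset.sum_image (fun a _ b _ hab => (Equiv.injective _) hab)]
    apply Finset.sum_congr rfl
    intro j _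
    rw [t.r_succ_eq i]
    simp [hσ]
  rw [hsum]
  have hexp : ∑ j ∈ T, t.bump i j =
      (∑ j ∈ T, t.r i.castSucc j) + (if t.removedIdx i ∈ T then (m : ℤ) else 0) := by
    rw [Finset.sum_congr rfl (fun j _ => t.bump_apply i j), Finset.sum_add_distrib]
    congr 1
    rw [Finset.sum_ite_eq' T (t.removedIdx i) (fun _ => (m : ℤ))]
  rw [hexp]
  have : (t.removedIdx i ∈ T) ↔ Brank t i < R := by
    rw [hT, t.brank_eq_removedIdx i]
    simp
  by_cases hc : Brank t i < R
  · simp [this, hc]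
  · simp [this, hc]

theorem brank_parking (hn : 0 < n) : IsParkingWord m n (Brank t) := by
  constructor
  · exact fun j => t.brank_lt j
  · intro R hR1 hRm
    set T := Finset.univ.filter (fun j : Fin m => (j : ℕ) < R) with hT
    have hTcard : T.card = R := by
      rw [hT]
      rw [show (Finset.univ.filter (fun j : Fin m => (j : ℕ) < R)) =
        (Finset.range R).attachFin (fun x hx => lt_of_lt_of_le (Finset.mem_range.1 hx) hRm) from ?_]
      · rw [Finset.card_attachFin, Finset.card_range]
      · ext j
        simp [Finset.mem_attachFin]
    set Φ : Fin (n+1) → ℤ := fun i => ∑ j ∈ T, t.r i j with hΦ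
    have hstep : ∀ K : ℕ, ∀ hK : K < n,
        Φ ⟨K+1, by omega⟩ ≤ Φ ⟨K, by omega⟩ + (if Brank t ⟨K, hK⟩ < R then (m:ℤ) else 0) := by
      intro K hK
      have h := t.phi_step R hRm ⟨K, hK⟩
      have h1 : (⟨K, hK⟩ : Fin n).succ = ⟨K+1, by omega⟩ := rfl
      have h2 : (⟨K, hK⟩ : Fin n).castSucc = ⟨K, by omega⟩ := rfl
      rw [h1, h2] at h
      exact h
    have hchain : ∀ K : ℕ, ∀ hK : K ≤ n, Φ ⟨K, by omega⟩ ≤ Φ ⟨0, by omega⟩ +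
        ∑ k ∈ Finset.range K,
          (if h : k < n then (if Brank t ⟨k, h⟩ < R then (m:ℤ) else 0) else 0) := by
      intro K
      induction K with
      | zero => intro hK; simp
      | succ K ih =>
        intro hK
        have hKn : K < n := by omega
        refine (hstep K hKn).trans ?_
        rw [Finset.sum_range_succ]
        have := ih (by omega)
        simp only [dif_pos hKn]
        omega
    have hlast : Φ ⟨n, by omega⟩ = Φ ⟨0, by omega⟩ + (R : ℤ) * n := by
      have h0 : (⟨n, by omega⟩ : Fin (n+1)) = Fin.last n := rfl
      have h1 : (⟨0, by omega⟩ : Fin (n+1)) = 0 := rfl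
      rw [hΦ]
      simp only [h0, h1]
      rw [Finset.sum_congr rfl (fun j _ => t.last j), Finset.sum_add_distrib,
        Finset.sum_const, hTcard]
      push_cast
      ring
    have hfin := hchain n le_rfl
    rw [hlast] at hfin
    have hsum : ∑ k ∈ Finset.range n,
        (if h : k < n then (if Brank t ⟨k, h⟩ < R then (m:ℤ) else 0) else 0) =
        (m : ℤ) * ((Finset.univ.filter (fun j : Fin n => Brank t j < R)).card : ℤ) := by
      rw [← Fin.sum_univ_eq_sum_range
        (fun k => if h : k < n then (if Brank t ⟨k, h⟩ < R then (m:ℤ) else 0) else 0) n]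
      have : ∀ i : Fin n,
          (if h : (i:ℕ) < n then (if Brank t ⟨(i:ℕ), h⟩ < R then (m:ℤ) else 0) else 0)
          = (if Brank t i < R then (m:ℤ) else 0) := by
        intro i
        rw [dif_pos i.isLt]
      rw [Finset.sum_congr rfl (fun i _ => this i)]
      rw [Finset.sum_ite, Finset.sum_const, Finset.sum_const_zero, add_zero]
      simp [mul_comm]
    rw [hsum] at hfin
    have h2 : (R : ℤ) * n ≤ (m : ℤ) * ((Finset.univ.filter (fun j : Fin n => Brank t j < R)).card : ℤ) := by
      linarith
    exact_mod_cast h2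

end ParkingTuple

/-! ### X1: the rank word determines the tuple -/
namespace ParkingTuple
variable {m n : ℕ}

lemma strictMono_perm_eq_one {σ : Equiv.Perm (Fin m)} (h : StrictMono (σ : Fin m → Fin m)) :
    σ = 1 := by
  have hle : ∀ k : Fin m, k ≤ σ k := fun k => Fin.le_def.2 (le_val_of_strictMono h k)
  have hsum : ∑ k : Fin m, ((σ k : ℕ)) = ∑ k : Fin m, (k : ℕ) :=
    Equiv.sum_comp σ (fun k : Fin m => (k : ℕ))
  have := (Finset.sum_eq_sum_iff_of_le (fun (k : Fin m) _ => Fin.le_def.1 (hle k))).1 hsum.symm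
  ext k
  exact ((this k (Finset.mem_univ k)).symm : ((σ k : ℕ) = k))

section Qstep
variable (t t' : ParkingTuple m n) (i : Fin n)

lemma monovary_r (i' : Fin (n+1)) : Monovary (t.r i') (t'.r i') := by
  intro a b hab
  by_contra hc
  push_neg at hc
  have hba : b < a := (t.strictMono_r i').lt_iff_lt.1 hc
  exact absurd hab (not_lt.2 (le_of_lt ((t'.strictMono_r i') hba)))

lemma sum_sq_sub (f g : Fin m → ℤ) :
    ∑ j : Fin m, (g j - f j)^2 =
      ∑ j : Fin m, (g j)^2 + ∑ j : Fin m, (f j)^2 - 2 * ∑ j : Fin m, f j * g j := by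
  rw [← Finset.sum_add_distrib, Finset.mul_sum, ← Finset.sum_sub_distrib]
  apply Finset.sum_congr rfl
  intros
  ring

/-- the key rearrangement step -/
lemma qstep (hJ : t.removedIdx i = t'.removedIdx i) :
    (∑ j : Fin m, (t'.r i.succ j - t.r i.succ j)^2 ≤
      ∑ j : Fin m, (t'.r i.castSucc j - t.r i.castSucc j)^2) ∧
    ((∑ j : Fin m, (t'.r i.succ j - t.r i.succ j)^2 =
      ∑ j : Fin m, (t'.r i.castSucc j - t.r i.castSucc j)^2) → t.sortPerm i = t'.sortPerm i) := by
  classical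
  set x' := t.r i.succ with hx'
  set y' := t'.r i.succ with hy'
  set u := t.bump i with hu
  set v := t'.bump i with hv
  set σ := t.sortPerm i with hσ
  set τ := t'.sortPerm i with hτ
  have hxu : x' = u ∘ σ := t.r_succ_eq i
  have hyv : y' = v ∘ τ := t'.r_succ_eq i
  set π : Equiv.Perm (Fin m) := τ⁻¹ * σ with hπ
  -- diff of bumps equals diff of previous states
  have hdiff : ∀ k, v k - u k = t'.r i.castSucc k - t.r i.castSucc k := by
    intro k
    rw [hu, hv, t.bump_apply i k, t'.bump_apply i k, hJ]
    ring
  -- B = ∑ x' * (y' ∘ π)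
  have hvσ : ∀ j, v (σ j) = y' (π j) := by
    intro j
    have : y' (τ.symm (σ j)) = v (τ (τ.symm (σ j))) := congrFun hyv (τ.symm (σ j))
    rw [Equiv.apply_symm_apply] at this
    rw [← this]
    rfl
  have hB : ∑ k : Fin m, u k * v k = ∑ j : Fin m, x' j * y' (π j) := by
    rw [← Equiv.sum_comp σ (fun k : Fin m => u k * v k)]
    apply Finset.sum_congr rfl
    intro j _
    rw [hvσ j]
    congr 1
    rw [hxu]
    rfl
  have hmono : Monovary x' y' := monovary_r t t' i.succ
  have hBA : ∑ j : Fin m, x' j * y' (π j) ≤ ∑ j : Fin m, x' j * y' j :=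
    hmono.sum_mul_comp_perm_le_sum_mul (σ := π)
  -- sum of squares identities
  have hsq1 : ∑ j : Fin m, (y' j - x' j)^2 =
      ∑ j : Fin m, (y' j)^2 + ∑ j : Fin m, (x' j)^2 - 2 * ∑ j : Fin m, x' j * y' j :=
    sum_sq_sub _ _
  have hsq2 : ∑ j : Fin m, (t'.r i.castSucc j - t.r i.castSucc j)^2 =
      ∑ j : Fin m, (v j)^2 + ∑ j : Fin m, (u j)^2 - 2 * ∑ j : Fin m, u j * v j := by
    rw [← sum_sq_sub u v]
    apply Finset.sum_congr rfl
    intro j _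
    rw [hdiff j]
  have hux : ∑ j : Fin m, (x' j)^2 = ∑ j : Fin m, (u j)^2 := by
    rw [hxu, ← Equiv.sum_comp σ (fun k : Fin m => (u k)^2)]
    rfl
  have hvy : ∑ j : Fin m, (y' j)^2 = ∑ j : Fin m, (v j)^2 := by
    rw [hyv, ← Equiv.sum_comp τ (fun k : Fin m => (v k)^2)]
    rfl
  constructor
  · rw [hsq1, hsq2, hux, hvy, hB]
    linarith
  · intro heq
    rw [hsq1, hsq2, hux, hvy, hB] at heq
    have heq2 : ∑ j : Fin m, x' j * y' (π j) = ∑ j : Fin m, x' j * y' j := by linarith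
    have hmv : Monovary x' (y' ∘ π) := (hmono.sum_mul_comp_perm_eq_sum_mul_iff (σ := π)).1 heq2
    -- conclude π = 1
    have hmono2 : Monotone (y' ∘ π) := by
      intro a b hab
      by_contra hc
      push_neg at hc
      have h1 : x' b ≤ x' a := hmv hc
      have h2 : ¬ a < b := fun hlt => absurd ((t.strictMono_r i.succ) hlt) (not_lt.2 h1)
      have : a = b := le_antisymm hab (not_lt.1 h2)
      subst this
      exact absurd hc (lt_irrefl _)
    have hinj2 : Function.Injective (y' ∘ π) :=
      (t'.r_injective i.succ).comp (Equiv.injective π)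
    have hsm : StrictMono (y' ∘ π) := hmono2.strictMono_of_injective hinj2
    have hπsm : StrictMono (π : Fin m → Fin m) := by
      intro a b hab
      have := hsm hab
      exact (t'.strictMono_r i.succ).lt_iff_lt.1 this
    have hπ1 : π = 1 := strictMono_perm_eq_one hπsm
    have : τ⁻¹ * σ = 1 := hπ1
    rw [hσ, hτ]
    calc t.sortPerm i = t'.sortPerm i * ((t'.sortPerm i)⁻¹ * t.sortPerm i) := by group
    _ = t'.sortPerm i * 1 := by rw [this]
    _ = t'.sortPerm i := mul_one _

end Qstep
end ParkingTuple

namespace ParkingTuple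
variable {m n : ℕ}

theorem brank_injective (hn : 0 < n) (hcop : Nat.Coprime m n)
    (t t' : ParkingTuple m n) (hq : ∀ i : Fin n, Brank t i = Brank t' i) : t = t' := by
  classical
  have hm : 0 < m := t.mpos hn
  have hJ : ∀ i : Fin n, t.removedIdx i = t'.removedIdx i := by
    intro i; apply Fin.ext
    rw [← t.brank_eq_removedIdx i, ← t'.brank_eq_removedIdx i, hq i]
  set Q : Fin (n+1) → ℤ := fun i' => ∑ j : Fin m, (t'.r i' j - t.r i' j)^2 with hQdef
  have hstep : ∀ K : ℕ, (hK : K < n) → Q ⟨K+1, by omega⟩ ≤ Q ⟨K, by omega⟩ :=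
    fun K hK => (qstep t t' ⟨K, hK⟩ (hJ ⟨K, hK⟩)).1
  have hchain : ∀ K L : ℕ, (hKL : K ≤ L) → (hL : L ≤ n) → Q ⟨L, by omega⟩ ≤ Q ⟨K, by omega⟩ := by
    intro K L
    induction L with
    | zero => intro h1 _; obtain rfl : K = 0 := Nat.le_zero.1 h1; exact le_rfl
    | succ L ih =>
      intro h1 h2
      by_cases hKL : K = L + 1
      · subst hKL; exact le_rfl
      · exact (hstep L (by omega)).trans (ih (by omega) (by omega))
  have hQn0 : Q ⟨n, by omega⟩ = Q ⟨0, by omega⟩ := by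
    rw [hQdef]
    apply Finset.sum_congr rfl
    intro j _
    have h1 : (⟨n, by omega⟩ : Fin (n+1)) = Fin.last n := rfl
    have h0 : (⟨0, by omega⟩ : Fin (n+1)) = (0 : Fin (n+1)) := rfl
    rw [h1, t.last j, t'.last j, h0]
    ring
  have hQeq : ∀ K : ℕ, (hK : K < n) → Q ⟨K+1, by omega⟩ = Q ⟨K, by omega⟩ := by
    intro K hK
    have h1 : Q ⟨n, by omega⟩ ≤ Q ⟨K+1, by omega⟩ := hchain _ _ (by omega) (by omega)
    have h2 : Q ⟨K, by omega⟩ ≤ Q ⟨0, by omega⟩ := hchain _ _ (by omega) (by omega)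
    have h3 := hstep K hK
    linarith [hQn0]
  have hσ : ∀ (i : Fin n), t.sortPerm i = t'.sortPerm i := by
    intro i
    apply (qstep t t' i (hJ i)).2
    exact hQeq i.val i.isLt
  -- thread permutations
  set σN : ℕ → Equiv.Perm (Fin m) := fun k => if h : k < n then t.sortPerm ⟨k, h⟩ else 1 with hσN
  set JN : ℕ → Fin m := fun k => if h : k < n then t.removedIdx ⟨k, h⟩ else ⟨0, hm⟩ with hJN
  set c : ℕ → Equiv.Perm (Fin m) :=
    fun k => Nat.rec 1 (fun k ck => (σN k)⁻¹ * ck) k with hcdef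
  have hcs : ∀ k, c (k+1) = (σN k)⁻¹ * c k := fun k => rfl
  set BN : ℕ → Fin m → ℕ :=
    fun K j => ((Finset.range K).filter (fun k => c k j = JN k)).card with hBNdef
  have hBN0 : ∀ j, BN 0 j = 0 := by intro j; simp [hBNdef]
  have hBNs : ∀ K j, BN (K+1) j = BN K j + (if c K j = JN K then 1 else 0) := by
    intro K j
    rw [hBNdef]
    simp only
    rw [Finset.range_add_one, Finset.filter_insert]
    by_cases h : c K j = JN K
    · rw [if_pos h, Finset.card_insert_of_notMem (by simp), if_pos h]
    · rw [if_neg h, if_neg h, add_zero]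
  have hval : ∀ (tt : ParkingTuple m n), (∀ i : Fin n, tt.sortPerm i = t.sortPerm i) →
      (∀ i : Fin n, tt.removedIdx i = t.removedIdx i) →
      ∀ K : ℕ, (hK : K ≤ n) → ∀ j : Fin m,
      tt.r ⟨K, by omega⟩ (c K j) = tt.r 0 j + m * BN K j := by
    intro tt httσ httJ K
    induction K with
    | zero =>
      intro _ j
      have h0 : (⟨0, by omega⟩ : Fin (n+1)) = (0 : Fin (n+1)) := rfl
      have hc0 : c 0 j = j := rfl
      rw [h0, hc0, hBN0]
      simp
    | succ K ih =>
      intro hK j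
      have hK' : K < n := by omega
      set i : Fin n := ⟨K, hK'⟩ with hi
      have hsucc : (⟨K+1, by omega⟩ : Fin (n+1)) = i.succ := rfl
      have hcast : (⟨K, by omega⟩ : Fin (n+1)) = i.castSucc := rfl
      have hc1 : c (K+1) j = (tt.sortPerm i)⁻¹ (c K j) := by
        rw [hcs K]
        have : σN K = tt.sortPerm i := by rw [hσN]; simp only [dif_pos hK']; exact (httσ i).symm
        rw [Equiv.Perm.mul_apply, this]
      rw [hsucc, hc1, tt.r_succ_eq i]
      have happ : (tt.bump i ∘ (tt.sortPerm i)) ((tt.sortPerm i)⁻¹ (c K j))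
          = tt.bump i (c K j) := by
        simp only [Function.comp_apply]
        congr 1
        exact Equiv.apply_symm_apply _ _
      rw [happ, tt.bump_apply i (c K j)]
      have hJK : JN K = tt.removedIdx i := by
        rw [hJN]; simp only [dif_pos hK']; exact (httJ i).symm
      have ihK := ih (by omega) j
      rw [hcast] at ihK
      rw [ihK, hBNs K j, hJK]
      by_cases h : c K j = tt.removedIdx i
      · rw [if_pos h, if_pos h]; push_cast; ring
      · rw [if_neg h, if_neg h]; push_cast; ring
  have hvt := hval t (fun _ => rfl) (fun _ => rfl)
  have hvt' := hval t' (fun i => (hσ i).symm) (fun i => (hJ i).symm)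
  set g : Equiv.Perm (Fin m) := c n with hg
  have hstar : ∀ j, t.r 0 (g j) = t.r 0 j + m * BN n j - n := by
    intro j
    have h1 := hvt n le_rfl j
    have h2 : t.r ⟨n, by omega⟩ (g j) = t.r 0 (g j) + n := by
      have hlast : (⟨n, by omega⟩ : Fin (n+1)) = Fin.last n := rfl
      rw [hlast, t.last]
    rw [hg] at h2 ⊢
    linarith [h1, h2]
  have hstar' : ∀ j, t'.r 0 (g j) = t'.r 0 j + m * BN n j - n := by
    intro j
    have h1 := hvt' n le_rfl j
    have h2 : t'.r ⟨n, by omega⟩ (g j) = t'.r 0 (g j) + n := by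
      have hlast : (⟨n, by omega⟩ : Fin (n+1)) = Fin.last n := rfl
      rw [hlast, t'.last]
    rw [hg] at h2 ⊢
    linarith [h1, h2]
  set d : Fin m → ℤ := fun j => t'.r 0 j - t.r 0 j with hd
  have hdg : ∀ j, d (g j) = d j := by
    intro j
    have h1 := hstar j
    have h2 := hstar' j
    rw [hd]
    simp only
    linarith
  have hiter : ∀ (L : ℕ) (j : Fin m),
      t.r 0 ((g^L) j) = t.r 0 j + (m : ℤ) * (∑ l ∈ Finset.range L, (BN n ((g^l) j) : ℤ))
        - (L : ℤ) * n := by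
    intro L
    induction L with
    | zero => intro j; simp
    | succ L ih =>
      intro j
      have h1 : (g^(L+1)) j = g ((g^L) j) := by
        rw [pow_succ']; rfl
      rw [h1, hstar ((g^L) j), ih j, Finset.sum_range_succ]
      push_cast
      ring
  have hper : ∀ L : ℕ, 0 < L → (g^L) ⟨0, hm⟩ = ⟨0, hm⟩ → m ∣ L := by
    intro L hL hfix
    have h1 := hiter L ⟨0, hm⟩
    rw [hfix] at h1
    have h2 : (m:ℤ) * (∑ l ∈ Finset.range L, (BN n ((g^l) ⟨0,hm⟩) : ℤ)) = (L:ℤ) * n := by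
      linarith
    have h3 : (m:ℤ) ∣ (L:ℤ) * (n:ℤ) := ⟨_, h2.symm⟩
    have h4 : m ∣ L * n := by exact_mod_cast h3
    exact hcop.dvd_of_dvd_mul_right h4
  have hfix : ∃ L, 0 < L ∧ L ≤ m ∧ (g^L) ⟨0,hm⟩ = ⟨0,hm⟩ := by
    have hni : ¬ Function.Injective (fun k : Fin (m+1) => (g^(k:ℕ)) ⟨0,hm⟩) := by
      intro hinj
      have := Fintype.card_le_of_injective _ hinj
      simp at this
    obtain ⟨A, B, hAB, hne⟩ := Function.not_injective_iff.1 hni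
    have key : ∀ (a b : ℕ), a < b → (g^b) ⟨0,hm⟩ = (g^a) ⟨0,hm⟩ → (g^(b-a)) ⟨0,hm⟩ = ⟨0,hm⟩ := by
      intro a b hab heq
      have h1 : g^b = g^a * g^(b-a) := by rw [← pow_add]; congr 1; omega
      rw [h1] at heq
      exact (g^a).injective heq
    rcases lt_or_gt_of_ne hne with hlt | hlt
    · exact ⟨B.val - A.val, by omega, by have := B.isLt; omega,
        key A.val B.val hlt hAB.symm⟩
    · exact ⟨A.val - B.val, by omega, by have := A.isLt; omega,
        key B.val A.val hlt hAB⟩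
  obtain ⟨L, hL0, hLm, hLfix⟩ := hfix
  have hLdvd := hper L hL0 hLfix
  have hLm' : L = m := le_antisymm hLm (Nat.le_of_dvd hL0 hLdvd)
  have horb : Function.Injective (fun k : Fin m => (g^(k:ℕ)) ⟨0,hm⟩) := by
    intro A B hAB
    by_contra hne
    have key : ∀ (a b : ℕ), a < b → b < m → (g^b) ⟨0,hm⟩ = (g^a) ⟨0,hm⟩ → False := by
      intro a b hab hbm heq
      have h1 : g^b = g^a * g^(b-a) := by rw [← pow_add]; congr 1; omega
      rw [h1] at heq
      have h2 : (g^(b-a)) ⟨0,hm⟩ = ⟨0,hm⟩ := (g^a).injective heq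
      have h3 := hper (b-a) (by omega) h2
      have := Nat.le_of_dvd (by omega) h3
      omega
    rcases lt_or_gt_of_ne (fun h : A = B => hne h) with hlt | hlt
    · exact key A.val B.val hlt B.isLt hAB.symm
    · exact key B.val A.val hlt A.isLt hAB
  have hsurj : Function.Surjective (fun k : Fin m => (g^(k:ℕ)) ⟨0,hm⟩) :=
    Finite.surjective_of_injective horb
  have hdzero : ∀ j, d j = 0 := by
    have h0 : d ⟨0,hm⟩ = 0 := by
      rw [hd]; simp only; rw [t.r_zero_zero hm, t'.r_zero_zero hm]; ring
    have hdpow : ∀ k : ℕ, d ((g^k) ⟨0,hm⟩) = 0 := by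
      intro k
      induction k with
      | zero => simpa using h0
      | succ k ih =>
        have h1 : (g^(k+1)) ⟨0,hm⟩ = g ((g^k) ⟨0,hm⟩) := by rw [pow_succ']; rfl
        rw [h1, hdg]; exact ih
    intro j
    obtain ⟨k, hk⟩ := hsurj j
    rw [← hk]
    exact hdpow k.val
  have hr0 : t.r 0 = t'.r 0 := by
    funext j
    have := hdzero j
    rw [hd] at this
    simp only at this
    linarith
  -- reconstruct all levels
  have hrK : ∀ K : ℕ, (hK : K ≤ n) → t.r ⟨K, by omega⟩ = t'.r ⟨K, by omega⟩ := by
    intro K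
    induction K with
    | zero =>
      intro _
      have h0 : (⟨0, by omega⟩ : Fin (n+1)) = (0 : Fin (n+1)) := rfl
      rw [h0]; exact hr0
    | succ K ih =>
      intro hK
      have hK' : K < n := by omega
      set i : Fin n := ⟨K, hK'⟩ with hi
      have hcast : (⟨K, by omega⟩ : Fin (n+1)) = i.castSucc := rfl
      have hsucc : (⟨K+1, by omega⟩ : Fin (n+1)) = i.succ := rfl
      have hprev : t.r i.castSucc = t'.r i.castSucc := by
        rw [← hcast]; exact ih (by omega)
      have hrem : t.removed i = t'.removed i := by
        rw [← t.r_removedIdx i, ← t'.r_removedIdx i, ← hJ i, hprev]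
      rw [hsucc]
      apply strictMono_eq_of_map_eq (t.strictMono_r _) (t'.strictMono_r _)
      rw [t.step i, t'.step i, hrem, hprev]
  have hrall : t.r = t'.r := by
    funext i'
    have h := hrK i'.val (by omega)
    have : (⟨i'.val, by omega⟩ : Fin (n+1)) = i' := rfl
    rwa [this] at h
  have hremall : t.removed = t'.removed := by
    funext i
    rw [← t.r_removedIdx i, ← t'.r_removedIdx i, ← hJ i, hrall]
  obtain ⟨r1, rm1, p1, p2, p3, p4, p5, p6, p7, p8⟩ := t
  obtain ⟨r2, rm2, q1, q2, q3, q4, q5, q6, q7, q8⟩ := t'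
  simp only at hrall hremall
  subst hrall
  subst hremall
  rfl

end ParkingTuple

/-! ### X3: construction of a tuple with prescribed A-word -/
namespace Construction
open Finset

variable {m n : ℕ} [NeZero m]

/-- the class word -/
def cw (p : Fin n → ℕ) (i : Fin n) : ZMod m := (-(n : ZMod m)) * (p i : ZMod m)

/-- cycle index of a residue -/
def cIdx (a : ℤ) (ρ : ZMod m) : ℕ := ((-(a : ZMod m)) * ρ).val

/-- explicit solution of the chain recursion -/
def E (m n : ℕ) (p : Fin n → ℕ) (c : ℕ) : ℤ :=
  (c : ℤ) * n - m * ((Finset.univ.filter (fun i : Fin n => m - c ≤ p i)).card : ℤ)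

def ee (a : ℤ) (p : Fin n → ℕ) (ρ : ZMod m) : ℤ := E m n p (cIdx a ρ)

/-- current level of class ρ at step k -/
def cur (a : ℤ) (p : Fin n → ℕ) (k : ℕ) (ρ : ZMod m) : ℤ :=
  ee a p ρ + m * (((Finset.univ.filter
    (fun i' : Fin n => (i' : ℕ) < k ∧ cw p i' = ρ)).card : ℕ) : ℤ)

def kcnt (p : Fin n → ℕ) (ρ : ZMod m) : ℕ :=
  (Finset.univ.filter (fun i : Fin n => cw p i = ρ)).card

variable (a : ℤ) (p : Fin n → ℕ)

lemma cast_E (c : ℕ) : ((E m n p c : ℤ) : ZMod m) = (c : ZMod m) * (n : ZMod m) := by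
  unfold E
  push_cast
  simp [ZMod.natCast_self]

section withHa
variable (ha : (m : ℤ) ∣ a * n + 1)

lemma neg_a_mul_n (ha : (m : ℤ) ∣ a * n + 1) : (-(a : ZMod m)) * (n : ZMod m) = 1 := by
  have h1 : ((a * n + 1 : ℤ) : ZMod m) = 0 := (ZMod.intCast_zmod_eq_zero_iff_dvd _ _).2 ha
  push_cast at h1
  linear_combination -h1

lemma cast_ee (ha : (m : ℤ) ∣ a * n + 1) (ρ : ZMod m) : ((ee a p ρ : ℤ) : ZMod m) = ρ := by
  unfold ee
  rw [cast_E]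
  unfold cIdx
  rw [ZMod.natCast_rightInverse _]
  calc (-(a:ZMod m)) * ρ * n = (-(a:ZMod m)) * n * ρ := by ring
  _ = 1 * ρ := by rw [neg_a_mul_n a ha]
  _ = ρ := one_mul ρ

lemma cast_cur (ha : (m : ℤ) ∣ a * n + 1) (k : ℕ) (ρ : ZMod m) :
    ((cur a p k ρ : ℤ) : ZMod m) = ρ := by
  unfold cur
  push_cast
  rw [ZMod.natCast_self]
  have := cast_ee a p ha ρ
  push_cast at this ⊢
  rw [this]
  ring

lemma cur_injective (ha : (m : ℤ) ∣ a * n + 1) (k : ℕ) :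
    Function.Injective (cur a p k : ZMod m → ℤ) := by
  intro ρ ρ' h
  have h1 := cast_cur a p ha k ρ
  have h2 := cast_cur a p ha k ρ'
  rw [h] at h1
  exact h1.symm.trans h2

lemma card_S (ha : (m : ℤ) ∣ a * n + 1) (k : ℕ) :
    (Finset.image (cur a p k : ZMod m → ℤ) Finset.univ).card = m := by
  rw [Finset.card_image_of_injective _ (cur_injective a p ha k), Finset.card_univ, ZMod.card]

lemma map_cur_univ (ha : (m : ℤ) ∣ a * n + 1) (k : ℕ) :
    Multiset.map (cur a p k : ZMod m → ℤ) Finset.univ.val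
      = (Finset.image (cur a p k : ZMod m → ℤ) Finset.univ).val := by
  rw [Finset.image_val]
  exact (Multiset.dedup_eq_self.2 (Multiset.Nodup.map (cur_injective a p ha k)
    Finset.univ.nodup)).symm

end withHa

lemma cur_zero (ρ : ZMod m) : cur a p 0 ρ = ee a p ρ := by
  unfold cur
  have : Finset.univ.filter (fun i' : Fin n => (i' : ℕ) < 0 ∧ cw p i' = ρ) = ∅ := by
    ext x; simp
  rw [this]
  simp

lemma cnt_succ {k : ℕ} (hk : k < n) (P : Fin n → Prop) [DecidablePred P] :
    (Finset.univ.filter (fun i' : Fin n => (i' : ℕ) < k + 1 ∧ P i')).card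
      = (Finset.univ.filter (fun i' : Fin n => (i' : ℕ) < k ∧ P i')).card
        + (if P ⟨k, hk⟩ then 1 else 0) := by
  by_cases hP : P ⟨k, hk⟩
  · rw [if_pos hP]
    have heq : Finset.univ.filter (fun i' : Fin n => (i' : ℕ) < k + 1 ∧ P i')
        = insert ⟨k, hk⟩ (Finset.univ.filter (fun i' : Fin n => (i' : ℕ) < k ∧ P i')) := by
      ext x
      simp only [Finset.mem_filter, Finset.mem_univ, true_and, Finset.mem_insert]
      constructor
      · rintro ⟨h1, h2⟩
        by_cases hx : (x : ℕ) = k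
        · exact Or.inl (Fin.ext hx)
        · exact Or.inr ⟨by omega, h2⟩
      · rintro (rfl | ⟨h1, h2⟩)
        · exact ⟨Nat.lt_succ_self k, hP⟩
        · exact ⟨by omega, h2⟩
    rw [heq, Finset.card_insert_of_notMem (by simp)]
  · rw [if_neg hP, add_zero]
    congr 1
    ext x
    simp only [Finset.mem_filter, Finset.mem_univ, true_and]
    constructor
    · rintro ⟨h1, h2⟩
      refine ⟨?_, h2⟩
      by_cases hx : (x : ℕ) = k
      · exact absurd (show P ⟨k, hk⟩ from (Fin.ext hx : x = ⟨k, hk⟩) ▸ h2) hP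
      · omega
    · rintro ⟨h1, h2⟩
      exact ⟨by omega, h2⟩

lemma cur_succ {k : ℕ} (hk : k < n) (ρ : ZMod m) :
    cur a p (k+1) ρ = cur a p k ρ + (if cw p ⟨k, hk⟩ = ρ then (m:ℤ) else 0) := by
  unfold cur
  rw [cnt_succ hk (fun i' => cw p i' = ρ)]
  by_cases h : cw p ⟨k, hk⟩ = ρ
  · rw [if_pos h, if_pos h]
    push_cast
    ring
  · rw [if_neg h, if_neg h]
    push_cast
    ring

lemma cur_last (ρ : ZMod m) : cur a p n ρ = ee a p ρ + m * (kcnt p ρ : ℤ) := by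
  unfold cur kcnt
  have h : Finset.univ.filter (fun i' : Fin n => (i' : ℕ) < n ∧ cw p i' = ρ)
      = Finset.univ.filter (fun i : Fin n => cw p i = ρ) := by
    ext x
    simp only [Finset.mem_filter, Finset.mem_univ, true_and]
    exact ⟨fun hh => hh.2, fun hh => ⟨x.isLt, hh⟩⟩
  rw [h]

end Construction

namespace Construction
open Finset
variable {m n : ℕ} [NeZero m] (a : ℤ) (p : Fin n → ℕ)

lemma a_mul_neg_n (ha : (m : ℤ) ∣ a * n + 1) : (a : ZMod m) * (-(n : ZMod m)) = 1 := by
  have := neg_a_mul_n a (n := n) ha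
  linear_combination this

lemma an_eq_neg_one (ha : (m : ℤ) ∣ a * n + 1) : (a : ZMod m) * (n : ZMod m) = -1 := by
  have := neg_a_mul_n a (n := n) ha
  linear_combination -this

lemma cw_eq_iff (ha : (m : ℤ) ∣ a * n + 1) (hp : ∀ j, p j < m) (i : Fin n) (ρ : ZMod m) :
    cw p i = ρ ↔ p i = ((a : ZMod m) * ρ).val := by
  constructor
  · intro h
    have h2 : ((p i : ℕ) : ZMod m) = (a : ZMod m) * ρ := by
      rw [← h]
      unfold cw
      calc ((p i : ℕ) : ZMod m) = ((a : ZMod m) * (-(n:ZMod m))) * (p i : ZMod m) := by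
            rw [a_mul_neg_n a ha, one_mul]
      _ = (a : ZMod m) * ((-(n:ZMod m)) * (p i : ZMod m)) := by ring
    rw [← h2, ZMod.val_cast_of_lt (hp i)]
  · intro h
    have h2 : ((p i : ℕ) : ZMod m) = (a : ZMod m) * ρ := by
      rw [h, ZMod.natCast_rightInverse]
    unfold cw
    rw [h2]
    calc (-(n:ZMod m)) * ((a:ZMod m) * ρ) = ((a : ZMod m) * (-(n:ZMod m))) * ρ := by ring
    _ = ρ := by rw [a_mul_neg_n a ha, one_mul]

lemma kcnt_eq (ha : (m : ℤ) ∣ a * n + 1) (hp : ∀ j, p j < m) (ρ : ZMod m) :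
    kcnt p ρ = (Finset.univ.filter (fun i : Fin n => p i = ((a : ZMod m) * ρ).val)).card := by
  unfold kcnt
  congr 1
  ext i
  simp only [Finset.mem_filter, Finset.mem_univ, true_and]
  exact cw_eq_iff a p ha hp i ρ

lemma cIdx_eq_zero_iff (ha : (m : ℤ) ∣ a * n + 1) (ρ : ZMod m) :
    cIdx a ρ = 0 ↔ ρ = 0 := by
  unfold cIdx
  rw [ZMod.val_eq_zero]
  constructor
  · intro h
    calc ρ = ((-(a:ZMod m)) * (n:ZMod m)) * ρ := by rw [neg_a_mul_n a ha, one_mul]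
    _ = (n : ZMod m) * ((-(a:ZMod m)) * ρ) := by ring
    _ = 0 := by rw [h, mul_zero]
  · intro h; rw [h, mul_zero]

lemma E_zero (hp : ∀ j, p j < m) : E m n p 0 = 0 := by
  unfold E
  have h : Finset.univ.filter (fun i : Fin n => m - 0 ≤ p i) = ∅ := by
    ext i
    simp only [Finset.mem_filter, Finset.mem_univ, true_and, Finset.notMem_empty, iff_false]
    have := hp i
    omega
  rw [h]
  simp

lemma filter_ge_card (c : ℕ) (hc : 1 ≤ c) (hp : ∀ j, p j < m) :
    ((Finset.univ.filter (fun i : Fin n => m - c ≤ p i)).card : ℤ)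
      = n - ((Finset.univ.filter (fun i : Fin n => p i < m - c)).card : ℤ) := by
  have h := Finset.card_filter_add_card_filter_not
    (s := (Finset.univ : Finset (Fin n))) (p := fun i : Fin n => p i < m - c)
  have h2 : (Finset.univ.filter (fun i : Fin n => ¬ p i < m - c))
      = Finset.univ.filter (fun i : Fin n => m - c ≤ p i) := by
    congr 1
    ext i
    constructor
    · intro hh; omega
    · intro hh; omega
  rw [h2, Finset.card_univ, Fintype.card_fin] at h
  push_cast
  omega

lemma ee_nonneg (ha : (m : ℤ) ∣ a * n + 1) (hp : IsParkingWord m n p) (ρ : ZMod m) :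
    0 ≤ ee a p ρ := by
  unfold ee
  set c := cIdx a ρ with hc
  by_cases hc0 : c = 0
  · rw [hc0, E_zero p hp.1]
  · have hcm : c < m := ZMod.val_lt _
    have hR := hp.2 (m - c) (by omega) (by omega)
    unfold E
    rw [filter_ge_card p c (by omega) hp.1]
    have hRn : ((m - c : ℕ) : ℤ) * n ≤
        (m:ℤ) * ((Finset.univ.filter (fun i : Fin n => p i < m - c)).card : ℤ) := by
      exact_mod_cast hR
    rw [Nat.cast_sub (le_of_lt hcm)] at hRn
    linarith

lemma filter_split (c : ℕ) (h1c : 1 ≤ c) (hcm : c < m) :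
    ((Finset.univ.filter (fun i : Fin n => m - c ≤ p i)).card : ℤ)
      = ((Finset.univ.filter (fun i : Fin n => p i = m - c)).card : ℤ)
        + ((Finset.univ.filter (fun i : Fin n => m - (c-1) ≤ p i)).card : ℤ) := by
  have hun : Finset.univ.filter (fun i : Fin n => m - c ≤ p i)
      = Finset.univ.filter (fun i : Fin n => p i = m - c)
        ∪ Finset.univ.filter (fun i : Fin n => m - (c-1) ≤ p i) := by
    ext i
    simp only [Finset.mem_filter, Finset.mem_union, Finset.mem_univ, true_and]
    omega
  rw [hun, Finset.card_union_of_disjoint]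
  · push_cast; ring
  · rw [Finset.disjoint_left]
    intro i hi1 hi2
    simp only [Finset.mem_filter, Finset.mem_univ, true_and] at hi1 hi2
    omega

lemma chain (ha : (m : ℤ) ∣ a * n + 1) (hp : ∀ j, p j < m) (ρ : ZMod m) :
    ee a p ρ + m * (kcnt p ρ : ℤ) = ee a p (ρ - (n : ZMod m)) + n := by
  by_cases hρ : ρ = 0
  · subst hρ
    have hc0 : cIdx a (0 : ZMod m) = 0 := by unfold cIdx; rw [mul_zero, ZMod.val_zero]
    have he0 : ee a p (0 : ZMod m) = 0 := by unfold ee; rw [hc0, E_zero p hp]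
    have hk0 : (kcnt p (0 : ZMod m) : ℤ)
        = ((Finset.univ.filter (fun i : Fin n => p i = 0)).card : ℤ) := by
      rw [kcnt_eq a p ha hp]
      norm_num
    have hcn : cIdx a ((0:ZMod m) - (n : ZMod m)) = (-1 : ZMod m).val := by
      unfold cIdx
      congr 1
      rw [zero_sub]
      calc (-(a:ZMod m)) * (-(n:ZMod m)) = (a:ZMod m) * (n:ZMod m) := by ring
      _ = -1 := an_eq_neg_one a ha
    rw [he0, hk0]
    unfold ee
    rw [hcn]
    by_cases hm1 : m = 1
    · subst hm1
      have hv : (-1 : ZMod 1).val = 0 := rfl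
      rw [hv, E_zero p hp]
      have hall : Finset.univ.filter (fun i : Fin n => p i = 0) = Finset.univ := by
        apply Finset.filter_true_of_mem
        intro i _
        have := hp i
        omega
      rw [hall, Finset.card_univ, Fintype.card_fin]
      push_cast
      ring
    · have hm2 : 2 ≤ m := by
        have := NeZero.pos m
        omega
      have hv1 : (-1 : ZMod m).val = m - 1 := by
        rw [ZMod.neg_val]
        rw [if_neg, ZMod.val_one_eq_one_mod, Nat.mod_eq_of_lt (by omega)]
        intro h
        have h2 : ((1:ℕ) : ZMod m) = 0 := by exact_mod_cast h
        rw [ZMod.natCast_eq_zero_iff] at h2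
        exact absurd (Nat.dvd_one.mp h2) (by omega)
      rw [hv1]
      unfold E
      have hf1 : Finset.univ.filter (fun i : Fin n => m - (m-1) ≤ p i)
          = Finset.univ.filter (fun i : Fin n => 1 ≤ p i) := by
        congr 1
        ext i
        omega
      rw [hf1]
      have hcompl : ((Finset.univ.filter (fun i : Fin n => 1 ≤ p i)).card : ℤ)
          = n - ((Finset.univ.filter (fun i : Fin n => p i = 0)).card : ℤ) := by
        have h := Finset.card_filter_add_card_filter_not
          (s := (Finset.univ : Finset (Fin n))) (p := fun i : Fin n => p i = 0)
        have h2 : (Finset.univ.filter (fun i : Fin n => ¬ p i = 0))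
            = Finset.univ.filter (fun i : Fin n => 1 ≤ p i) := by
          congr 1
          ext i
          omega
        rw [h2, Finset.card_univ, Fintype.card_fin] at h
        push_cast
        omega
      rw [hcompl, Nat.cast_sub (by omega : 1 ≤ m)]
      push_cast
      ring
  · set c := cIdx a ρ with hcdef
    have hc0 : c ≠ 0 := fun h => hρ ((cIdx_eq_zero_iff a ha ρ).1 h)
    have hcm : c < m := ZMod.val_lt _
    have hcast : ((c : ℕ) : ZMod m) = (-(a:ZMod m)) * ρ := ZMod.natCast_rightInverse _
    have hidx : cIdx a (ρ - (n : ZMod m)) = c - 1 := by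
      unfold cIdx
      have h1 : (-(a:ZMod m)) * (ρ - n) = ((c:ℕ) : ZMod m) - 1 := by
        have h2 : (-(a:ZMod m)) * (n : ZMod m) = 1 := neg_a_mul_n a ha
        calc (-(a:ZMod m)) * (ρ - (n:ZMod m)) = (-(a:ZMod m)) * ρ - (-(a:ZMod m)) * n := by ring
        _ = ((c:ℕ):ZMod m) - 1 := by rw [hcast, h2]
      rw [h1]
      have h3 : (((c:ℕ)):ZMod m) - 1 = (((c - 1 : ℕ)) : ZMod m) := by
        rw [Nat.cast_sub (by omega : 1 ≤ c)]
        push_cast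
        ring
      rw [h3, ZMod.val_cast_of_lt (by omega)]
    have hval : ((a:ZMod m) * ρ).val = m - c := by
      have h1 : (a:ZMod m) * ρ = -((-(a:ZMod m)) * ρ) := by ring
      rw [h1, ← hcast, ZMod.neg_val]
      rw [if_neg, ZMod.val_cast_of_lt hcm]
      intro h
      have h2 := congrArg ZMod.val h
      rw [ZMod.val_cast_of_lt hcm, ZMod.val_zero] at h2
      exact hc0 h2
    unfold ee
    rw [hidx, kcnt_eq a p ha hp, hval]
    unfold E
    rw [filter_split p c (by omega) hcm]
    rw [Nat.cast_sub (by omega : 1 ≤ c)]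
    push_cast
    ring

end Construction

namespace Construction
open Finset

lemma ee_zero {m n : ℕ} [NeZero m] (a : ℤ) (p : Fin n → ℕ) (hp : ∀ j, p j < m) :
    ee a p (0 : ZMod m) = 0 := by
  unfold ee
  have hc0 : cIdx a (0 : ZMod m) = 0 := by unfold cIdx; rw [mul_zero, ZMod.val_zero]
  rw [hc0, E_zero p hp]

theorem exists_tuple {m n : ℕ} (hm : 0 < m) (hn : 0 < n) (a : ℤ)
    (ha : (m : ℤ) ∣ a * (n : ℤ) + 1) (p : Fin n → ℕ) (hp : IsParkingWord m n p) :
    ∃ t : ParkingTuple m n, Aword a t = p := by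
  haveI : NeZero m := ⟨hm.ne'⟩
  set S : ℕ → Finset ℤ := fun k => Finset.image (cur a p k : ZMod m → ℤ) Finset.univ with hS
  have hcard : ∀ k, (S k).card = m := fun k => card_S a p ha k
  set r : Fin (n+1) → Fin m → ℤ := fun k j => (S k.val).orderEmbOfFin (hcard k.val) j with hr
  set rm : Fin n → ℤ := fun i => cur a p i.val (cw p i) with hrm
  have hmono : ∀ k, StrictMono (r k) := fun k => (Finset.orderEmbOfFin _ _).strictMono
  have hmem : ∀ (k : Fin (n+1)) j, r k j ∈ S k.val := fun k j => Finset.orderEmbOfFin_mem _ _ _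
  have himg : ∀ k : Fin (n+1), Finset.image (r k) Finset.univ = S k.val := by
    intro k
    apply Finset.eq_of_subset_of_card_le
    · intro x hx; rcases Finset.mem_image.1 hx with ⟨j, -, rfl⟩; exact hmem k j
    · rw [hcard, Finset.card_image_of_injective _ (hmono k).injective, Finset.card_univ,
        Fintype.card_fin]
  have hmapr : ∀ k : Fin (n+1), Multiset.map (r k) Finset.univ.val = (S k.val).val := by
    intro k
    rw [← himg k, Finset.image_val,
      Multiset.dedup_eq_self.2 (Multiset.Nodup.map (hmono k).injective Finset.univ.nodup)]
  have hSmap : ∀ k : ℕ, Multiset.map (cur a p k : ZMod m → ℤ) Finset.univ.val = (S k).val :=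
    fun k => map_cur_univ a p ha k
  -- the structure
  refine ⟨⟨r, rm, fun k => (hmono k).monotone, ?_, ?_, ?_, ?_, ?_, ?_, ?_⟩, ?_⟩
  -- res
  · intro i j k hdvd
    obtain ⟨ρj, -, hρj⟩ := Finset.mem_image.1 (himg i ▸ Finset.mem_image_of_mem (r i) (Finset.mem_univ j))
    obtain ⟨ρk, -, hρk⟩ := Finset.mem_image.1 (himg i ▸ Finset.mem_image_of_mem (r i) (Finset.mem_univ k))
    have h0 : ((r i j - r i k : ℤ) : ZMod m) = 0 := (ZMod.intCast_zmod_eq_zero_iff_dvd _ _).2 hdvd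
    rw [← hρj, ← hρk] at h0
    push_cast at h0
    rw [cast_cur a p ha, cast_cur a p ha] at h0
    have hρ : ρj = ρk := by
      have := sub_eq_zero.1 h0
      exact this
    apply (hmono i).injective
    rw [← hρj, ← hρk, hρ]
  -- nonneg
  · intro j
    have h := hmem 0 j
    have h0 : ((0 : Fin (n+1)) : ℕ) = 0 := rfl
    rw [h0] at h
    obtain ⟨ρ, -, hρ⟩ := Finset.mem_image.1 h
    rw [← hρ, cur_zero]
    exact ee_nonneg a p ha hp ρ
  -- zero_min
  · have h0 : (0:ℤ) ∈ S 0 := by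
      rw [hS]
      refine Finset.mem_image.2 ⟨0, Finset.mem_univ _, ?_⟩
      rw [cur_zero, ee_zero a p hp.1]
    have h1 : (0:ℤ) ∈ Finset.image (r 0) Finset.univ := by rw [himg 0]; exact h0
    obtain ⟨j, -, hj⟩ := Finset.mem_image.1 h1
    exact ⟨j, hj⟩
  -- closed
  · intro j
    obtain ⟨ρ, -, hρ⟩ := Finset.mem_image.1 (himg 0 ▸ Finset.mem_image_of_mem (r 0) (Finset.mem_univ j))
    have hch := chain a p ha hp.1 (ρ + (n : ZMod m))
    rw [add_sub_cancel_right] at hch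
    have hmem2 : cur a p 0 (ρ + (n : ZMod m)) ∈ S 0 :=
      Finset.mem_image.2 ⟨_, Finset.mem_univ _, rfl⟩
    have hmem3 : cur a p 0 (ρ + (n : ZMod m)) ∈ Finset.image (r 0) Finset.univ := by
      rw [himg 0]; exact hmem2
    obtain ⟨j', -, hj'⟩ := Finset.mem_image.1 hmem3
    refine ⟨j', kcnt p (ρ + (n : ZMod m)), ?_⟩
    have h00 : ((0 : Fin (n+1)) : ℕ) = 0 := rfl
    rw [h00] at hρ
    rw [← hρ, hj', cur_zero, cur_zero]
    linarith [hch]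
  -- mem
  · intro i
    rw [hmapr i.castSucc]
    rw [Finset.mem_val]
    have hcs : (i.castSucc : ℕ) = i.val := rfl
    rw [hcs]
    exact Finset.mem_image.2 ⟨cw p i, Finset.mem_univ _, rfl⟩
  -- step
  · intro i
    have hsv : (i.succ : ℕ) = i.val + 1 := rfl
    have hcv : (i.castSucc : ℕ) = i.val := rfl
    rw [hmapr i.succ, hmapr i.castSucc, hsv, hcv]
    have hupd : (cur a p (i.val+1) : ZMod m → ℤ)
        = Function.update (cur a p i.val : ZMod m → ℤ) (cw p i : ZMod m)
            ((cur a p i.val : ZMod m → ℤ) (cw p i) + m) := by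
      funext ρ
      have h := cur_succ a p i.isLt ρ
      have hfin : (⟨i.val, i.isLt⟩ : Fin n) = i := rfl
      rw [hfin] at h
      by_cases hρ : ρ = cw p i
      · subst hρ
        rw [Function.update_self, h, if_pos rfl]
      · rw [Function.update_of_ne hρ, h, if_neg (fun hh => hρ hh.symm), add_zero]
    rw [← hSmap (i.val+1), ← hSmap i.val, hupd,
      map_update_univ _ (cur_injective a p ha i.val) (cw p i)]
  -- last
  · have hstrict2 : StrictMono (fun j => r 0 j + (n:ℤ)) := fun j k hjk =>
      add_lt_add_of_lt_of_le (hmono 0 hjk) le_rfl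
    have hfun : r (Fin.last n) = fun j => r 0 j + (n:ℤ) := by
      apply strictMono_eq_of_map_eq (hmono _) hstrict2
      rw [hmapr (Fin.last n)]
      have hlv : ((Fin.last n) : ℕ) = n := rfl
      rw [hlv]
      have h1 : Multiset.map (fun j => r 0 j + (n:ℤ)) Finset.univ.val
          = Multiset.map (fun x => x + (n:ℤ)) (Multiset.map (r 0) Finset.univ.val) := by
        rw [Multiset.map_map]
        rfl
      rw [h1, hmapr 0]
      have h0v : ((0 : Fin (n+1)) : ℕ) = 0 := rfl
      rw [h0v]
      -- (S n).val = map (·+n) (S 0).val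
      have hcur : (cur a p n : ZMod m → ℤ)
          = (fun ρ : ZMod m => cur a p 0 ρ + (n:ℤ)) ∘ (fun ρ : ZMod m => ρ - (n : ZMod m)) := by
        funext ρ
        simp only [Function.comp_apply]
        rw [cur_last, chain a p ha hp.1 ρ, cur_zero]
      have hsub : Finset.image (fun ρ : ZMod m => ρ - (n : ZMod m)) Finset.univ
          = Finset.univ := by
        apply Finset.eq_univ_of_card
        rw [Finset.card_image_of_injective _ (fun x y hxy => by
          have : x - (n:ZMod m) + (n:ZMod m) = y - (n:ZMod m) + (n:ZMod m) := by rw [hxy]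
          simpa using this)]
        exact Finset.card_univ
      have himg2 : S n = Finset.image (fun x : ℤ => x + (n:ℤ)) (S 0) := by
        calc S n = Finset.image (cur a p n : ZMod m → ℤ) Finset.univ := rfl
        _ = Finset.image ((fun ρ : ZMod m => cur a p 0 ρ + (n:ℤ))
              ∘ (fun ρ : ZMod m => ρ - (n:ZMod m))) Finset.univ := by rw [hcur]
        _ = Finset.image (fun ρ : ZMod m => cur a p 0 ρ + (n:ℤ))
              (Finset.image (fun ρ : ZMod m => ρ - (n:ZMod m)) Finset.univ) := by
            rw [Finset.image_image]
        _ = Finset.image (fun ρ : ZMod m => cur a p 0 ρ + (n:ℤ)) Finset.univ := by rw [hsub]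
        _ = Finset.image (fun x : ℤ => x + (n:ℤ))
              (Finset.image (cur a p 0 : ZMod m → ℤ) Finset.univ) := by
            rw [Finset.image_image]
            rfl
        _ = Finset.image (fun x : ℤ => x + (n:ℤ)) (S 0) := rfl
      rw [himg2, Finset.image_val,
        Multiset.dedup_eq_self.2 (Multiset.Nodup.map (fun x y hxy => by
          have : x + (n:ℤ) = y + (n:ℤ) := hxy
          omega) (S 0).nodup)]
    intro j
    rw [hfun]
  -- Aword = p
  · funext i
    unfold Aword
    simp only
    have hc : ((rm i : ℤ) : ZMod m) = cw p i := cast_cur a p ha i.val (cw p i)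
    have hmod : ((a * rm i : ℤ) : ZMod m) = (((p i : ℕ) : ℤ) : ZMod m) := by
      push_cast
      rw [hc]
      unfold cw
      calc (a : ZMod m) * ((-(n:ZMod m)) * (p i : ZMod m))
          = ((a:ZMod m) * (-(n:ZMod m))) * (p i : ZMod m) := by ring
      _ = (p i : ZMod m) := by rw [a_mul_neg_n a ha, one_mul]
    have hemod : (a * rm i) % (m:ℤ) = ((p i : ℕ) : ℤ) % (m:ℤ) :=
      (ZMod.intCast_eq_intCast_iff' _ _ _).1 hmod
    rw [hemod, Int.emod_eq_of_lt (by positivity) (by exact_mod_cast hp.1 i)]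
    exact Int.toNat_natCast _

end Construction



/-- Equidistribution of area and dinv on (m,n)-parking words:
`area = (m-1)(n-1)/2 - ∑ A(𝔭)_i` and `dinv = (m-1)(n-1)/2 - ∑ B(𝔭)_i` have the
same distribution, where `A` and `B` are the two bijections from parking
(m,n)-filter tuples to (m,n)-parking words (so the composite `ζ = B ∘ A⁻¹`
is a bijection of the set of parking words witnessing
`∑_p q^{area(p)} = ∑_p q^{dinv(p)}`). -/
theorem area_dinv_equidistributed (m n : ℕ) (hm : 0 < m) (hn : 0 < n)
    (hcop : Nat.Coprime m n) (a : ℤ) (ha : (m : ℤ) ∣ a * (n : ℤ) + 1) :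
    ∀ k : ℤ,
      Nat.card {t : ParkingTuple m n //
        (((m : ℤ) - 1) * ((n : ℤ) - 1)) / 2 - (∑ i, (Aword a t i : ℤ)) = k} =
      Nat.card {t : ParkingTuple m n //
        (((m : ℤ) - 1) * ((n : ℤ) - 1)) / 2 - (∑ i, (Brank t i : ℤ)) = k} := by
  intro k
  haveI : Finite (ParkingTuple m n) := by
    apply Finite.of_injective
      (fun t : ParkingTuple m n => (fun i : Fin n => (⟨Brank t i, t.brank_lt i⟩ : Fin m)))
    intro t t' h
    apply ParkingTuple.brank_injective hn hcop t t'
    intro i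
    have := congrFun h i
    exact congrArg Fin.val this
  have hΦex : ∀ t : ParkingTuple m n, ∃ t' : ParkingTuple m n, Aword a t' = Brank t :=
    fun t => Construction.exists_tuple hm hn a ha (Brank t) (t.brank_parking hn)
  choose Φ hΦ using hΦex
  have hΦinj : Function.Injective Φ := by
    intro t t' h
    apply ParkingTuple.brank_injective hn hcop t t'
    intro i
    have h1 := congrFun (hΦ t) i
    have h2 := congrFun (hΦ t') i
    rw [← h1, ← h2, h]
  have hΦbij : Function.Bijective Φ := Finite.injective_iff_bijective.1 hΦinj
  have hsum : ∀ t : ParkingTuple m n,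
      (∑ i, (Aword a (Φ t) i : ℤ)) = ∑ i, (Brank t i : ℤ) := by
    intro t
    apply Finset.sum_congr rfl
    intro i _
    exact_mod_cast congrFun (hΦ t) i
  symm
  apply Nat.card_congr
  exact (Equiv.ofBijective Φ hΦbij).subtypeEquiv (fun t => by
    rw [Equiv.ofBijective_apply, hsum t])
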